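/- Let X be a nonnegative random variable with E[X²/loglog X] < ∞, where loglog x := ln max(e, ln max(e,x)), and let d_n = √(2 n loglog n). Then E[(X − δ d_n)⁺] = o(√(loglog n / n)) as n → ∞, for every δ > 0. -/

import Mathlib

open MeasureTheory Filter Asymptotics

/-- `loglog x = ln (max e (ln (max e x)))`. -/
noncomputable def loglog (x : ℝ) : ℝ :=
  Real.log (max (Real.exp 1) (Real.log (max (Real.exp 1) x)))

lemma one_le_loglog (x : ℝ) : 1 ≤ loglog x := by
  have := Real.log_le_log (Real.exp_pos 1)
    (le_max_left (Real.exp 1) (Real.log (max (Real.exp 1) x)))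
  rwa [Real.log_exp] at this

lemma loglog_pos (x : ℝ) : 0 < loglog x := lt_of_lt_of_le one_pos (one_le_loglog x)

lemma loglog_mono : Monotone loglog := by
  intro x y h
  unfold loglog
  have h1 : (0:ℝ) < max (Real.exp 1) x := lt_max_of_lt_left (Real.exp_pos 1)
  apply Real.log_le_log (lt_max_of_lt_left (Real.exp_pos 1))
  exact max_le_max le_rfl (Real.log_le_log h1 (max_le_max le_rfl h))

lemma loglog_eq_one {x : ℝ} (hx : x ≤ Real.exp (Real.exp 1)) : loglog x = 1 := by
  have h1 : (1:ℝ) ≤ Real.exp 1 := Real.one_le_exp zero_le_one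
  have h2 : max (Real.exp 1) x ≤ Real.exp (Real.exp 1) :=
    max_le (Real.exp_le_exp.mpr h1) hx
  have h3 : Real.log (max (Real.exp 1) x) ≤ Real.exp 1 := by
    have := Real.log_le_log (lt_max_of_lt_left (Real.exp_pos 1)) h2
    rwa [Real.log_exp] at this
  rw [loglog, max_eq_left h3, Real.log_exp]

lemma loglog_eq {x : ℝ} (hx : Real.exp (Real.exp 1) ≤ x) : loglog x = Real.log (Real.log x) := by
  have h1 : (1:ℝ) ≤ Real.exp 1 := Real.one_le_exp zero_le_one
  have hex : Real.exp 1 ≤ x := le_trans (Real.exp_le_exp.mpr h1) hx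
  have h2 : Real.exp 1 ≤ Real.log x := by
    have := Real.log_le_log (Real.exp_pos _) hx
    rwa [Real.log_exp] at this
  rw [loglog, max_eq_right hex, max_eq_right h2]

lemma loglog_le_self {x : ℝ} (hx : Real.exp 1 ≤ x) : loglog x ≤ x := by
  have h0 : (0:ℝ) < x := lt_of_lt_of_le (Real.exp_pos 1) hx
  rw [loglog, max_eq_right hx]
  have h1 : Real.log x ≤ x := Real.log_le_self h0.le
  have h2 : max (Real.exp 1) (Real.log x) ≤ x := max_le hx h1
  calc Real.log (max (Real.exp 1) (Real.log x)) ≤ max (Real.exp 1) (Real.log x) :=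
        Real.log_le_self (le_max_of_le_left (Real.exp_pos 1).le)
    _ ≤ x := h2

lemma loglog_core {a x : ℝ} (ha : Real.exp (Real.exp 1) ≤ a) (hax : a ≤ x) :
    loglog x * a ≤ loglog a * x := by
  have h1 : (1:ℝ) ≤ Real.exp 1 := Real.one_le_exp zero_le_one
  have ha0 : (0:ℝ) < a := lt_of_lt_of_le (Real.exp_pos _) ha
  have hx0 : (0:ℝ) < x := lt_of_lt_of_le ha0 hax
  have hla : Real.exp 1 ≤ Real.log a := by
    have := Real.log_le_log (Real.exp_pos _) ha
    rwa [Real.log_exp] at this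
  have hla1 : (1:ℝ) ≤ Real.log a := le_trans h1 hla
  have hla0 : (0:ℝ) < Real.log a := lt_of_lt_of_le one_pos hla1
  have hlx : Real.log a ≤ Real.log x := Real.log_le_log ha0 hax
  have hlx0 : (0:ℝ) < Real.log x := lt_of_lt_of_le hla0 hlx
  have hlla : (1:ℝ) ≤ Real.log (Real.log a) := by
    have := Real.log_le_log (Real.exp_pos 1) hla
    rwa [Real.log_exp] at this
  -- log log x - log log a ≤ log x / log a - 1
  have h2 : Real.log (Real.log x) - Real.log (Real.log a) ≤ Real.log x / Real.log a - 1 := by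
    rw [← Real.log_div hlx0.ne' hla0.ne']
    exact Real.log_le_sub_one_of_pos (div_pos hlx0 hla0)
  -- log x - log a ≤ x / a - 1
  have h3 : Real.log x - Real.log a ≤ x / a - 1 := by
    rw [← Real.log_div hx0.ne' ha0.ne']
    exact Real.log_le_sub_one_of_pos (div_pos hx0 ha0)
  have h4 : Real.log x / Real.log a - 1 ≤ Real.log x - Real.log a := by
    rw [div_sub_one hla0.ne']
    exact div_le_self (by linarith) hla1
  have h5 : x / a * a = x := div_mul_cancel₀ x ha0.ne'
  have hxa1 : (1:ℝ) ≤ x / a := (one_le_div ha0).mpr hax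
  rw [loglog_eq ha, loglog_eq (le_trans ha hax)]
  have key : Real.log (Real.log x) ≤ Real.log (Real.log a) * (x / a) := by
    nlinarith [h2, h3, h4, hlla, hxa1]
  calc Real.log (Real.log x) * a ≤ Real.log (Real.log a) * (x / a) * a :=
        mul_le_mul_of_nonneg_right key ha0.le
    _ = Real.log (Real.log a) * x := by rw [mul_assoc, h5]

lemma loglog_mul_le {a x : ℝ} (ha : 0 < a) (hax : a ≤ x) :
    loglog x * a ≤ loglog a * x := by
  by_cases hx : x ≤ Real.exp (Real.exp 1)
  · rw [loglog_eq_one hx, loglog_eq_one (hax.trans hx)]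
    linarith
  · push_neg at hx
    by_cases ha2 : a ≤ Real.exp (Real.exp 1)
    · have h2 := loglog_core le_rfl hx.le
      rw [loglog_eq_one (le_refl (Real.exp (Real.exp 1)))] at h2
      rw [loglog_eq_one ha2]
      have h3 : loglog x * a ≤ loglog x * Real.exp (Real.exp 1) :=
        mul_le_mul_of_nonneg_left ha2 (loglog_pos x).le
      linarith
    · exact loglog_core (le_of_not_ge ha2) hax

lemma measurable_loglog : Measurable loglog := by
  unfold loglog
  exact Real.measurable_log.comp ((measurable_const.max
    (Real.measurable_log.comp (measurable_const.max measurable_id))))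

lemma exp_exp_one_le_21 : Real.exp (Real.exp 1) ≤ 21 := by
  have h1 : Real.exp 1 < 2.7182818286 := Real.exp_one_lt_d9
  have h2 : Real.exp (Real.exp 1) ≤ Real.exp 3 := Real.exp_le_exp.mpr (by linarith)
  have h3 : Real.exp 3 = Real.exp 1 * Real.exp 1 * Real.exp 1 := by
    rw [← Real.exp_add, ← Real.exp_add]; norm_num
  have h4 : (0:ℝ) < Real.exp 1 := Real.exp_pos 1
  nlinarith

theorem truncated_mean_littleO {Ω : Type*} [MeasurableSpace Ω]
    (P : Measure Ω) [IsProbabilityMeasure P]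
    (X : Ω → ℝ) (hmeas : Measurable X) (hnonneg : ∀ ω, 0 ≤ X ω)
    (hint : Integrable (fun ω => X ω ^ 2 / loglog (X ω)) P)
    (d : ℕ → ℝ) (hd : ∀ n : ℕ, d n = Real.sqrt (2 * n * loglog n)) :
    ∀ δ : ℝ, 0 < δ →
      (fun n : ℕ => ∫ ω, max (X ω - δ * d n) 0 ∂P)
        =o[atTop] (fun n : ℕ => Real.sqrt (loglog n / n)) := by
  intro δ hδ
  set Y : Ω → ℝ := fun ω => X ω ^ 2 / loglog (X ω) with hYdef
  have hYmeas : Measurable Y := (hmeas.pow_const 2).div (measurable_loglog.comp hmeas)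
  have hYnn : ∀ ω, 0 ≤ Y ω := fun ω => div_nonneg (sq_nonneg _) (loglog_pos _).le
  have hYint : Integrable Y P := hint
  set S : ℕ → Set Ω := fun n => {ω | δ * d n < X ω} with hSdef
  have hSmeas : ∀ n, MeasurableSet (S n) := fun n => measurableSet_lt measurable_const hmeas
  set G : ℕ → ℝ := fun n => ∫ ω, (S n).indicator Y ω ∂P with hGdef
  have hGint : ∀ n, Integrable ((S n).indicator Y) P := fun n => hYint.indicator (hSmeas n)
  have hGnn : ∀ n, 0 ≤ G n := fun n =>
    integral_nonneg (fun ω => Set.indicator_nonneg (fun x _ => hYnn x) ω)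
  -- d n ≥ √ n
  have hd_ge : ∀ n : ℕ, Real.sqrt n ≤ d n := by
    intro n
    rw [hd]
    apply Real.sqrt_le_sqrt
    nlinarith [one_le_loglog (n:ℝ), Nat.cast_nonneg (α := ℝ) n]
  -- δ * d n → ∞ (eventual lower bound form)
  have hdlarge : ∀ C : ℝ, ∀ᶠ n : ℕ in atTop, C ≤ δ * d n := by
    intro C
    filter_upwards [eventually_ge_atTop ⌈(C / δ) ^ 2⌉₊] with n hn
    have h1 : (C / δ) ^ 2 ≤ (n : ℝ) := le_trans (Nat.le_ceil _) (Nat.cast_le.mpr hn)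
    have h2 : C / δ ≤ Real.sqrt n := by
      calc C / δ ≤ |C / δ| := le_abs_self _
        _ = Real.sqrt ((C / δ) ^ 2) := (Real.sqrt_sq_eq_abs _).symm
        _ ≤ Real.sqrt n := Real.sqrt_le_sqrt h1
    have h3 : C / δ ≤ d n := le_trans h2 (hd_ge n)
    calc C = C / δ * δ := by field_simp
      _ ≤ d n * δ := mul_le_mul_of_nonneg_right h3 hδ.le
      _ = δ * d n := mul_comm _ _
  -- G → 0
  have hG0 : Tendsto G atTop (nhds 0) := by
    have h0 : Tendsto G atTop (nhds (∫ (_ : Ω), (0:ℝ) ∂P)) := by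
      apply tendsto_integral_of_dominated_convergence Y
        (fun n => (hGint n).aestronglyMeasurable) hYint
      · intro n
        filter_upwards with ω
        rw [Real.norm_eq_abs, abs_of_nonneg (Set.indicator_nonneg (fun x _ => hYnn x) ω)]
        exact Set.indicator_le_self' (fun x _ => hYnn x) ω
      · filter_upwards with ω
        apply Tendsto.congr' _ (tendsto_const_nhds (x := (0:ℝ)))
        filter_upwards [hdlarge (X ω)] with n hn
        have : ω ∉ S n := by simp only [hSdef, Set.mem_setOf_eq, not_lt]; exact hn
        rw [Set.indicator_of_notMem this]
      done
    simpa using h0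
  -- pointwise bound
  have hpt : ∀ n : ℕ, 0 < δ * d n → ∀ ω,
      max (X ω - δ * d n) 0 ≤ (loglog (δ * d n) / (δ * d n)) * (S n).indicator Y ω := by
    intro n hn ω
    by_cases h : δ * d n < X ω
    · have hmem : ω ∈ S n := h
      rw [Set.indicator_of_mem hmem]
      have h1 := loglog_mul_le hn h.le
      have h2 : Y ω * loglog (X ω) = X ω ^ 2 := div_mul_cancel₀ _ (loglog_pos (X ω)).ne'
      have hX : 0 < X ω := lt_trans hn h
      have hc : 0 < loglog (δ * d n) := loglog_pos _
      apply max_le _ (mul_nonneg (div_nonneg (loglog_pos _).le hn.le) (hYnn ω))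
      have key : X ω * (δ * d n) ≤ loglog (δ * d n) * Y ω := by
        nlinarith [mul_le_mul_of_nonneg_left h1 (hYnn ω), h2, hX, hn, hYnn ω]
      have : X ω ≤ loglog (δ * d n) / (δ * d n) * Y ω := by
        rw [div_mul_eq_mul_div, le_div_iff₀ hn]
        linarith
      linarith
    · have hmem : ω ∉ S n := h
      rw [Set.indicator_of_notMem hmem, mul_zero]
      exact max_le (by push_neg at h; linarith) le_rfl
  -- integrability of truncations
  have hfint : ∀ n : ℕ, 0 < δ * d n →
      Integrable (fun ω => max (X ω - δ * d n) 0) P := by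
    intro n hn
    apply Integrable.mono ((hGint n).const_mul (loglog (δ * d n) / (δ * d n)))
      (((hmeas.sub measurable_const).max measurable_const).aestronglyMeasurable)
    filter_upwards with ω
    have h1 := hpt n hn ω
    have h2 : (0:ℝ) ≤ max (X ω - δ * d n) 0 := le_max_right _ _
    rw [Real.norm_eq_abs, Real.norm_eq_abs]; change |max (X ω - δ * d n) 0| ≤ _; rw [abs_of_nonneg h2]
    exact h1.trans (le_abs_self _)
  -- integral bound
  have hIbound : ∀ n : ℕ, 0 < δ * d n →
      ∫ ω, max (X ω - δ * d n) 0 ∂P ≤ loglog (δ * d n) / (δ * d n) * G n := by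
    intro n hn
    have h1 : ∫ ω, max (X ω - δ * d n) 0 ∂P
        ≤ ∫ ω, loglog (δ * d n) / (δ * d n) * (S n).indicator Y ω ∂P :=
      integral_mono (hfint n hn) ((hGint n).const_mul _) (hpt n hn)
    rwa [integral_const_mul] at h1
  -- the littleO statement
  rw [isLittleO_iff]
  intro ε hε
  have hεδ : 0 < ε * δ / 2 := by positivity
  have hGsmall : ∀ᶠ n in atTop, G n < ε * δ / 2 := hG0.eventually_lt_const hεδ
  have h21 : ∀ᶠ n : ℕ in atTop, (21:ℝ) ≤ (n:ℝ) := by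
    filter_upwards [eventually_ge_atTop 21] with n hn
    exact_mod_cast hn
  have hn2δ : ∀ᶠ n : ℕ in atTop, 2 * δ ≤ (n:ℝ) := by
    filter_upwards [eventually_ge_atTop ⌈2*δ⌉₊] with n hn
    exact le_trans (Nat.le_ceil _) (Nat.cast_le.mpr hn)
  filter_upwards [hGsmall, h21, hn2δ, hdlarge 1] with n hG21 hn21 hnδ hd1
  have hnpos : (0:ℝ) < n := by linarith
  have ha : 0 < δ * d n := lt_of_lt_of_le one_pos hd1
  have hdn0 : 0 < d n := by nlinarith
  set L := loglog (n:ℝ) with hL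
  have hL1 : (1:ℝ) ≤ L := one_le_loglog _
  have heen : Real.exp (Real.exp 1) ≤ (n:ℝ) := le_trans exp_exp_one_le_21 hn21
  have he1n : Real.exp 1 ≤ (n:ℝ) := by
    have : Real.exp 1 ≤ Real.exp (Real.exp 1) :=
      Real.exp_le_exp.mpr (Real.one_le_exp zero_le_one)
    linarith
  have hLn : L ≤ (n:ℝ) := loglog_le_self he1n
  -- d n ≤ 2 n
  have hd2n : d n ≤ 2 * n := by
    rw [hd]
    have h1 : 2 * (n:ℝ) * loglog n ≤ (2 * n) ^ 2 := by nlinarith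
    calc Real.sqrt (2 * (n:ℝ) * loglog n) ≤ Real.sqrt ((2*(n:ℝ))^2) := Real.sqrt_le_sqrt h1
      _ = 2 * n := Real.sqrt_sq (by positivity)
  -- loglog (δ d n) ≤ 2 L
  have hlla : loglog (δ * d n) ≤ 2 * L := by
    have h1 : δ * d n ≤ (n:ℝ)^2 := by nlinarith
    have h2 : loglog (δ * d n) ≤ loglog ((n:ℝ)^2) := loglog_mono h1
    have h3 : Real.exp (Real.exp 1) ≤ (n:ℝ)^2 := by nlinarith
    have h4 : loglog ((n:ℝ)^2) = Real.log (2 * Real.log n) := by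
      rw [loglog_eq h3, Real.log_pow]
      norm_num
    have hln : Real.exp 1 ≤ Real.log n := by
      have := Real.log_le_log (Real.exp_pos _) heen
      rwa [Real.log_exp] at this
    have hln0 : (0:ℝ) < Real.log n := lt_of_lt_of_le (Real.exp_pos 1) hln
    have h5 : Real.log (2 * Real.log n) = Real.log 2 + Real.log (Real.log n) := by
      rw [Real.log_mul (by norm_num) hln0.ne']
    have h6 : Real.log 2 ≤ 1 := by
      have := Real.log_le_sub_one_of_pos (x := 2) (by norm_num)
      linarith
    have h7 : loglog (n:ℝ) = Real.log (Real.log n) := loglog_eq heen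
    have h8 : 1 ≤ Real.log (Real.log n) := by rw [← h7]; exact hL1
    rw [h4, h5] at h2
    rw [hL, h7]
    linarith
  -- L ≤ d n * √(L/n)  (in fact d n * √(L/n) = √2 * L)
  set s := Real.sqrt (L / n) with hs
  have hs0 : 0 ≤ s := Real.sqrt_nonneg _
  have hdns : L ≤ d n * s := by
    have h1 : d n * s = Real.sqrt (2 * (n:ℝ) * L * (L / n)) := by
      rw [hd, hs, ← Real.sqrt_mul (by positivity)]
    have h2 : 2 * (n:ℝ) * L * (L / n) = 2 * L^2 := by field_simp
    have h3 : Real.sqrt (2 * L^2) = Real.sqrt 2 * L := by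
      rw [Real.sqrt_mul (by norm_num), Real.sqrt_sq (by linarith)]
    have h4 : (1:ℝ) ≤ Real.sqrt 2 := by
      rw [show (1:ℝ) = Real.sqrt 1 by simp]
      exact Real.sqrt_le_sqrt (by norm_num)
    rw [h1, h2, h3]
    nlinarith
  -- final chain
  have hI := hIbound n ha
  have hcnn : 0 ≤ loglog (δ * d n) / (δ * d n) := div_nonneg (loglog_pos _).le ha.le
  have hstep1 : loglog (δ * d n) / (δ * d n) * G n
      ≤ loglog (δ * d n) / (δ * d n) * (ε * δ / 2) :=
    mul_le_mul_of_nonneg_left hG21.le hcnn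
  have hstep2 : loglog (δ * d n) / (δ * d n) ≤ 2 * s / δ := by
    rw [div_le_div_iff₀ ha hδ]
    -- loglog (δ d n) * δ ≤ 2 s * (δ * d n)
    have : loglog (δ * d n) ≤ 2 * (d n * s) := by linarith
    nlinarith
  have hfn : 0 ≤ ∫ ω, max (X ω - δ * d n) 0 ∂P :=
    integral_nonneg (fun ω => le_max_right _ _)
  rw [Real.norm_eq_abs, Real.norm_eq_abs, abs_of_nonneg hfn, abs_of_nonneg hs0]
  calc ∫ ω, max (X ω - δ * d n) 0 ∂P ≤ loglog (δ * d n) / (δ * d n) * G n := hI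
    _ ≤ loglog (δ * d n) / (δ * d n) * (ε * δ / 2) := hstep1
    _ ≤ 2 * s / δ * (ε * δ / 2) := mul_le_mul_of_nonneg_right hstep2 (by positivity)
    _ = ε * s := by field_simp
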